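/- The behavior predicate fs_beh composes along the monadic bind: for every m : io α, continuation k : α → io β, history h, local trace lt1 relative to h, intermediate result r1 : α, local trace lt2 relative to h ++ lt1, and result r : β, if fs_beh m h lt1 r1 and fs_beh (k r1) (h ++ lt1) lt2 r hold, then fs_beh (io_bind m k) h (lt1 @ lt2) r holds. -/

import Mathlib

set_option linter.unusedVariables false

/-- File descriptors, modelled as natural numbers. -/
abbrev file_descr := Nat

/-- An event records an IO operation together with its argument and result
(left injection for success, right injection for failure). -/
inductive event : Type where
| EvOpen : String → Sum file_descr String → event
| EvRead : file_descr → Sum String String → event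
| EvWrite : file_descr × String → Sum Unit String → event
| EvClose : file_descr → Sum Unit String → event

/-- A history is a list of past events, most recent first. -/
abbrev history := List event

/-- A file descriptor fresh with respect to a history. -/
def fresh_fd (h : history) : file_descr := h.length

/-- An event is admissible w.r.t. a history: successful opens must use a fresh
file descriptor. -/
def ev_ok (h : history) : event → Prop
| event.EvOpen _ (Sum.inl fd) => fd = fresh_fd h
| _ => True

/-- Well-formedness of a trace with respect to a history. -/
def well_formed_local_trace (h : history) : List event → Prop
| [] => True
| ev :: tl => ev_ok h ev ∧ well_formed_local_trace (ev :: h) tl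

/-- Local traces relative to a history `h`: traces well formed w.r.t. `h`. -/
def local_trace (h : history) := {lt : List event // well_formed_local_trace h lt}

/-- `hist_ext h lt` (written `h ++ lt` in the paper): the history obtained by
prepending the reverse of the trace `lt` to `h`. -/
def hist_ext (h : history) (lt : List event) : history := lt.reverse ++ h

theorem wf_lt_append (lt1 : List event) (h : history) (lt2 : List event)
    (h1 : well_formed_local_trace h lt1)
    (h2 : well_formed_local_trace (hist_ext h lt1) lt2) :
    well_formed_local_trace h (lt1 ++ lt2) := by
  induction lt1 generalizing h with
  | nil => simpa [hist_ext] using h2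
  | cons ev tl ih =>
    obtain ⟨hok, htl⟩ := h1
    refine ⟨hok, ih (ev :: h) htl ?_⟩
    simpa [hist_ext, List.append_assoc] using h2

/-- Concatenation of local traces (written `lt @ lt'` in the paper). -/
def ltapp {h : history} (lt1 : local_trace h) (lt2 : local_trace (hist_ext h lt1.val)) :
    local_trace h :=
  ⟨lt1.val ++ lt2.val, wf_lt_append lt1.val h lt2.val lt1.property lt2.property⟩

/-- The empty local trace. -/
def nil_lt (h : history) : local_trace h := ⟨[], trivial⟩

/-- Postconditions over a local trace and a result. -/
def hist_post (h : history) (α : Type) := local_trace h → α → Prop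

/-- Predicate transformers mapping postconditions to preconditions. -/
def hist0 (α : Type) := (h : history) → hist_post h α → Prop

/-- Monotonicity of a predicate transformer. -/
def hist_wp_monotonic {α : Type} (wp : hist0 α) : Prop :=
  ∀ (h : history) (p1 p2 : hist_post h α),
    (∀ lt r, p1 lt r → p2 lt r) → wp h p1 → wp h p2

/-- The hist monad: monotonic predicate transformers. -/
def hist (α : Type) := {wp : hist0 α // hist_wp_monotonic wp}

def hist_return {α : Type} (x : α) : hist α :=
  ⟨fun h p => p (nil_lt h) x, fun h p1 p2 hp hw => hp _ _ hw⟩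

def hist_bind {α β : Type} (w : hist α) (k : α → hist β) : hist β :=
  ⟨fun h p => w.val h (fun lt r => (k r).val (hist_ext h lt.val)
      (fun lt' r' => p (ltapp lt lt') r')),
   by
     intro h p1 p2 hp hw
     refine w.property h _ _ ?_ hw
     intro lt r hk
     refine (k r).property _ _ _ ?_ hk
     intro lt' r' hpp
     exact hp _ _ hpp⟩

/-- Pointwise equivalence of predicate transformers. -/
def hist_equiv {α : Type} (w1 w2 : hist α) : Prop := ∀ h p, w1.val h p ↔ w2.val h p

/-- The file operations. -/
inductive io_ops : Type where
| OOpen | ORead | OWrite | OClose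

/-- Argument type of each operation. -/
def io_args : io_ops → Type
| .OOpen => String
| .ORead => file_descr
| .OWrite => file_descr × String
| .OClose => file_descr

/-- Result type of each operation (Either-valued: possibly failing). -/
def io_res (o : io_ops) : io_args o → Type := fun _ =>
  match o with
  | .OOpen => Sum file_descr String
  | .ORead => Sum String String
  | .OWrite => Sum Unit String
  | .OClose => Sum Unit String

/-- The free IO monad. -/
inductive io (α : Type) : Type where
| Return : α → io α
| Call : (o : io_ops) → (args : io_args o) → (io_res o args → io α) → io α

def io_return {α : Type} (x : α) : io α := .Return x

def io_bind {α β : Type} : io α → (α → io β) → io β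
| .Return x, k => k x
| .Call o args ok, k => .Call o args (fun i => io_bind (ok i) k)

/-- Turn an operation call and result into an event. -/
def op_to_ev : (o : io_ops) → (args : io_args o) → io_res o args → event
| .OOpen, s, r => .EvOpen s r
| .ORead, fd, r => .EvRead fd r
| .OWrite, a, r => .EvWrite a r
| .OClose, fd, r => .EvClose fd r

/-- The operation's postcondition: a successful open returns `fresh_fd h`. -/
def io_post (h : history) : (o : io_ops) → (args : io_args o) → io_res o args → Prop
| .OOpen, _, Sum.inl fd => fd = fresh_fd h
| .OOpen, _, Sum.inr _ => True
| .ORead, _, _ => True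
| .OWrite, _, _ => True
| .OClose, _, _ => True

/-- Specification of an operation as a predicate transformer. -/
def op_wp (o : io_ops) (args : io_args o) : hist (io_res o args) :=
  ⟨fun h p => ∀ (lt : local_trace h) (r : io_res o args),
      (io_post h o args r ∧ lt.val = [op_to_ev o args r]) → p lt r,
   fun h p1 p2 hp hw lt r hc => hp _ _ (hw lt r hc)⟩

/-- Weakest-precondition semantics of free IO computations. -/
def theta {α : Type} : io α → hist α
| .Return x => hist_return x
| .Call o args k => hist_bind (op_wp o args) (fun r => theta (k r))

/-- The behavior (strongest postcondition) of an IO computation. -/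
def fs_beh {α : Type} (m : io α) (h : history) (lt : local_trace h) (r : α) : Prop :=
  ∀ p : hist_post h α, (theta m).val h p → p lt r

lemma lt_cast_val {h1 h2 : history} (e : h1 = h2) (lt : local_trace h1) :
    (e ▸ lt : local_trace h2).val = lt.val := by subst e; rfl

lemma hist_cast {α : Type} (w : hist α) {h1 h2 : history} (e : h1 = h2)
    (p2 : hist_post h2 α)
    (hw : w.val h1 (fun lt r => p2 (e ▸ lt) r)) : w.val h2 p2 := by
  subst e; exact hw

lemma theta_bind_mono {α β : Type} (m : io α) : ∀ (k : α → io β) (h : history)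
    (p : hist_post h β),
    (theta (io_bind m k)).val h p →
    (theta m).val h (fun lt r1 => (theta (k r1)).val (hist_ext h lt.val)
      (fun lt' r' => p (ltapp lt lt') r')) := by
  induction m with
  | Return x =>
    intro k h p hw
    show (theta (k x)).val (hist_ext h []) _
    refine (theta (k x)).property _ _ _ ?_ hw
    intro lt r hp
    have : ltapp (nil_lt h) lt = lt := Subtype.ext rfl
    rw [this]
    exact hp
  | Call o args g ih =>
    intro k h p hw
    intro lt i hc
    have A := ih i k (hist_ext h lt.val) (fun lt' r' => p (ltapp lt lt') r') (hw lt i hc)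
    refine (theta (g i)).property _ _ _ ?_ A
    intro lt2 a hk
    have e : hist_ext (hist_ext h lt.val) lt2.val = hist_ext h (ltapp lt lt2).val := by
      simp [hist_ext, ltapp]
    refine hist_cast (theta (k a)) e _ ?_
    refine (theta (k a)).property _ _ _ ?_ hk
    intro lt3 b hp
    have : ltapp (ltapp lt lt2) (e ▸ lt3) = ltapp lt (ltapp lt2 lt3) := by
      apply Subtype.ext
      simp [ltapp, lt_cast_val, List.append_assoc]
      exact lt_cast_val e lt3
    rw [this]
    exact hp

/-- `fs_beh` composes along monadic bind. -/
theorem fs_beh_bind_compose {α β : Type} (m : io α) (k : α → io β) (h : history)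
    (lt1 : local_trace h) (r1 : α) (lt2 : local_trace (hist_ext h lt1.val)) (r : β)
    (h1 : fs_beh m h lt1 r1) (h2 : fs_beh (k r1) (hist_ext h lt1.val) lt2 r) :
    fs_beh (io_bind m k) h (ltapp lt1 lt2) r := by
  intro p H
  exact h2 _ (h1 _ (theta_bind_mono m k h p H))
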